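/- Let Q ⊂ ℤ^d be a finite set and let Λ(Q) := {m − k : m ∈ Q, k ∈ Q}. Let p be a prime and a a natural number with 1 ≤ a < p such that for every nonzero m ∈ Λ(Q) one has m₁ + a·m₂ + ⋯ + a^{d−1}·m_d ≢ 0 (mod p). Define ξ^ν ∈ 𝕋^d by ξ^ν_j := 2π·{ν·a^{j−1}/p} for ν = 1, …, p. Then for every t ∈ 𝒯(Q) one has ‖t‖₂² = (1/p)·∑_{ν=1}^p |t(ξ^ν)|². -/

import Mathlib

open MeasureTheory Real Finset

noncomputable section

/-- The cube `[0, 2π)^d` representing the torus `𝕋^d`. -/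
def torusCube (d : ℕ) : Set (Fin d → ℝ) := Set.univ.pi fun _ => Set.Ico 0 (2 * π)

/-- The trigonometric polynomial with frequencies in `Q` and coefficients `c`. -/
def trigSum {d : ℕ} (Q : Finset (Fin d → ℤ)) (c : (Fin d → ℤ) → ℂ) : (Fin d → ℝ) → ℂ :=
  fun x => ∑ k ∈ Q, c k * Complex.exp (Complex.I * ∑ j, (k j : ℂ) * (x j : ℂ))

/-- `‖f‖_q^q = (2π)^{-d} ∫_{𝕋^d} |f(x)|^q dx`. -/
def lqNormPow (d : ℕ) (q : ℝ) (f : (Fin d → ℝ) → ℂ) : ℝ :=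
  ((2 * π) ^ d)⁻¹ * ∫ x in torusCube d, ‖f x‖ ^ q

open Classical in
/-- The step hyperbolic cross `Q_n`. -/
def hyperCross (d n : ℕ) : Finset (Fin d → ℤ) :=
  (Fintype.piFinset fun _ : Fin d => Finset.Icc (-(2 ^ n : ℤ)) (2 ^ n)).filter
    fun k => ∃ s : Fin d → ℕ, (∑ j, s j) ≤ n ∧
      ∀ j, ((2 ^ s j / 2 : ℕ) : ℤ) ≤ |k j| ∧ |k j| < 2 ^ s j

/-- sup-norm over the torus. -/
def supNorm (d : ℕ) (f : (Fin d → ℝ) → ℂ) : ℝ := ⨆ x : Fin d → ℝ, ‖f x‖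

/-- entropy number `ε_k(A, L_∞)` with centers in `A`. -/
def entropyNum (d : ℕ) (A : Set ((Fin d → ℝ) → ℂ)) (k : ℕ) : ℝ :=
  sInf {ε : ℝ | ∃ y : Fin (2 ^ k) → ((Fin d → ℝ) → ℂ), (∀ j, y j ∈ A) ∧
    ∀ f ∈ A, ∃ j, ∀ x, ‖f x - y j x‖ ≤ ε}

/-- unit `L_q`-ball of `𝒯(Q_n)`. -/
def trigBall (d : ℕ) (Q : Finset (Fin d → ℤ)) (q : ℝ) : Set ((Fin d → ℝ) → ℂ) :=
  {f | ∃ c : (Fin d → ℤ) → ℂ, f = trigSum Q c ∧ (lqNormPow d q f) ^ (1 / q) ≤ 1}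

/-- the points `ξ^ν` built from `a` and `p`. -/
def xiPoint (d p a : ℕ) (ν : ℕ) : Fin d → ℝ :=
  fun j => 2 * π * Int.fract ((ν * a ^ (j : ℕ) : ℝ) / p)

/-- Dirichlet kernel of `Q`. -/
def dirKernel {d : ℕ} (Q : Finset (Fin d → ℤ)) : (Fin d → ℝ) → ℂ :=
  fun x => ∑ k ∈ Q, Complex.exp (Complex.I * ∑ j, (k j : ℂ) * (x j : ℂ))

/-- `Λ(Q) = {m - k : m ∈ Q, k ∈ Q}`. -/
def diffSet {d : ℕ} (Q : Finset (Fin d → ℤ)) : Finset (Fin d → ℤ) :=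
  (Q ×ˢ Q).image fun z => z.1 - z.2


lemma int1' (n : ℤ) : ∫ x in Set.Ico (0:ℝ) (2*π), Complex.exp (Complex.I * n * x) =
    if n = 0 then (2*π : ℂ) else 0 := by
  rw [setIntegral_congr_set (Ico_ae_eq_Ioc),
    ← intervalIntegral.integral_of_le (by positivity : (0:ℝ) ≤ 2*π)]
  by_cases hn : n = 0
  · simp [hn, Complex.ofReal_mul]
  · rw [if_neg hn]
    have hc : (Complex.I * n) ≠ 0 := by simp [Complex.I_ne_zero, hn]
    rw [integral_exp_mul_complex hc]
    have : Complex.I * n * (2*π:ℝ) = n * (2 * π * Complex.I) := by push_cast; ring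
    rw [this, Complex.exp_int_mul_two_pi_mul_I]
    simp

lemma intCube' (d : ℕ) (n : Fin d → ℤ) :
    ∫ x in torusCube d, Complex.exp (Complex.I * ∑ j, (n j : ℂ) * (x j : ℂ)) =
      if n = 0 then ((2*π : ℝ)^d : ℂ) else 0 := by
  have hmeas : MeasurableSet (torusCube d) :=
    MeasurableSet.univ_pi fun _ => measurableSet_Ico
  have hexp : ∀ x : Fin d → ℝ, Complex.exp (Complex.I * ∑ j, (n j : ℂ) * (x j : ℂ))
      = ∏ j, Complex.exp (Complex.I * n j * (x j : ℂ)) := by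
    intro x
    rw [← Complex.exp_sum, Finset.mul_sum]
    ring_nf
  calc ∫ x in torusCube d, Complex.exp (Complex.I * ∑ j, (n j : ℂ) * (x j : ℂ))
      = ∫ x : Fin d → ℝ, ∏ j, (Set.Ico (0:ℝ) (2*π)).indicator
          (fun y : ℝ => Complex.exp (Complex.I * n j * y)) (x j) := by
        rw [← integral_indicator hmeas]
        congr 1; funext x
        by_cases hx : x ∈ torusCube d
        · rw [Set.indicator_of_mem hx, hexp]
          refine Finset.prod_congr rfl fun j _ => ?_
          rw [Set.indicator_of_mem (hx j (Set.mem_univ j))]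
        · rw [Set.indicator_of_notMem hx]
          obtain ⟨j, -, hj⟩ : ∃ j ∈ Finset.univ, x j ∉ Set.Ico (0:ℝ) (2*π) := by
            simpa [torusCube, Set.mem_pi, not_forall] using hx
          exact (Finset.prod_eq_zero (Finset.mem_univ j)
            (by rw [Set.indicator_of_notMem hj])).symm
    _ = ∏ j, ∫ y : ℝ, (Set.Ico (0:ℝ) (2*π)).indicator
          (fun y : ℝ => Complex.exp (Complex.I * n j * y)) y :=
        MeasureTheory.integral_fintype_prod_eq_prod _
    _ = ∏ j, ∫ y in Set.Ico (0:ℝ) (2*π), Complex.exp (Complex.I * n j * y) := by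
        refine Finset.prod_congr rfl fun j _ => ?_
        rw [integral_indicator measurableSet_Ico]
    _ = if n = 0 then ((2*π : ℝ)^d : ℂ) else 0 := by
        simp_rw [int1']
        by_cases hn : n = 0
        · simp [hn]
        · rw [if_neg hn]
          obtain ⟨j, hj⟩ := Function.ne_iff.mp hn
          exact Finset.prod_eq_zero (Finset.mem_univ j)
            (by simp only [Pi.zero_apply] at hj; simp [hj])

lemma keypt' (d p a : ℕ) (hp : 0 < p) (n : Fin d → ℤ) (ν : ℕ) :
    Complex.exp (Complex.I * ∑ j, (n j : ℂ) * (xiPoint d p a ν j : ℂ)) =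
      Complex.exp (2 * π * Complex.I * ν * (∑ j, n j * (a:ℤ)^(j:ℕ) : ℤ) / p) := by
  have hpc : (p : ℂ) ≠ 0 := by exact_mod_cast hp.ne'
  have hfac : ∀ j : Fin d, Complex.exp (Complex.I * ((n j : ℂ) * (xiPoint d p a ν j : ℂ)))
      = Complex.exp (2 * π * Complex.I * ν * ((n j : ℂ) * (a:ℂ)^(j:ℕ)) / p) := by
    intro j
    have harg : Complex.I * ((n j : ℂ) * (xiPoint d p a ν j : ℂ))
        = 2 * π * Complex.I * ν * ((n j : ℂ) * (a:ℂ)^(j:ℕ)) / p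
          + (-(n j * ⌊((ν * a ^ (j:ℕ) : ℝ))/p⌋) : ℤ) * (2*π*Complex.I) := by
      simp only [xiPoint, Int.fract]
      push_cast
      field_simp
      ring
    rw [harg, Complex.exp_add, Complex.exp_int_mul_two_pi_mul_I, mul_one]
  calc Complex.exp (Complex.I * ∑ j, (n j : ℂ) * (xiPoint d p a ν j : ℂ))
      = ∏ j, Complex.exp (Complex.I * ((n j : ℂ) * (xiPoint d p a ν j : ℂ))) := by
        rw [← Complex.exp_sum, Finset.mul_sum]
    _ = ∏ j, Complex.exp (2 * π * Complex.I * ν * ((n j : ℂ) * (a:ℂ)^(j:ℕ)) / p) :=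
        Finset.prod_congr rfl fun j _ => hfac j
    _ = Complex.exp (2 * π * Complex.I * ν * (∑ j, n j * (a:ℤ)^(j:ℕ) : ℤ) / p) := by
        rw [← Complex.exp_sum]
        congr 1
        push_cast
        rw [Finset.mul_sum, Finset.sum_div]

lemma pointSum' (d p a : ℕ) (hp : 0 < p) (n : Fin d → ℤ) :
    ∑ ν ∈ Finset.Icc 1 p, Complex.exp (Complex.I * ∑ j, (n j : ℂ) * (xiPoint d p a ν j : ℂ)) =
      if (p:ℤ) ∣ ∑ j, n j * (a:ℤ)^(j:ℕ) then (p:ℂ) else 0 := by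
  set S : ℤ := ∑ j, n j * (a:ℤ)^(j:ℕ) with hS
  simp_rw [keypt' d p a hp n]
  set ω : ℂ := Complex.exp (2 * π * Complex.I * S / p) with hω
  have hpow : ∀ ν : ℕ, Complex.exp (2 * π * Complex.I * ν * S / p) = ω ^ ν := by
    intro ν
    rw [hω, ← Complex.exp_nat_mul]
    congr 1; ring
  simp_rw [← hS, hpow]
  have hpc : (p : ℂ) ≠ 0 := by exact_mod_cast hp.ne'
  by_cases hdvd : (p:ℤ) ∣ S
  · obtain ⟨q, hq⟩ := hdvd
    have hω1 : ω = 1 := by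
      rw [hω, hq]
      have : 2 * π * Complex.I * ((p:ℤ) * q : ℤ) / p = (q : ℤ) * (2 * π * Complex.I) := by
        push_cast; field_simp
      rw [this, Complex.exp_int_mul_two_pi_mul_I]
    simp [hω1, hq, Nat.card_Icc]
  · rw [if_neg hdvd]
    have hω1 : ω ≠ 1 := by
      rw [hω]
      intro h
      rw [Complex.exp_eq_one_iff] at h
      obtain ⟨m, hm⟩ := h
      apply hdvd
      refine ⟨m, ?_⟩
      have h2 : (2 * π * Complex.I : ℂ) ≠ 0 := by
        simp [Complex.I_ne_zero, Real.pi_ne_zero]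
      have : (S : ℂ) = p * m := by
        field_simp at hm
        exact mul_left_cancel₀ h2 (by linear_combination (2 * π * Complex.I) * hm)
      exact_mod_cast this
    have hωp : ω ^ p = 1 := by
      rw [hω, ← Complex.exp_nat_mul]
      have : (p:ℂ) * (2 * π * Complex.I * S / p) = (S:ℤ) * (2 * π * Complex.I) := by
        field_simp
      rw [this, Complex.exp_int_mul_two_pi_mul_I]
    rw [← Finset.Ico_add_one_right_eq_Icc, Finset.sum_Ico_eq_sum_range, Nat.add_sub_cancel]
    have : ∑ i ∈ Finset.range p, ω ^ (1 + i) = ω * ∑ i ∈ Finset.range p, ω ^ i := by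
      rw [Finset.mul_sum]
      exact Finset.sum_congr rfl fun i _ => by rw [pow_add, pow_one]
    rw [this, geom_sum_eq hω1, hωp]
    simp

lemma normsq' (z : ℂ) : ((‖z‖^2 : ℝ) : ℂ) = z * (starRingEnd ℂ) z := by
  rw [Complex.mul_conj]
  norm_cast
  rw [Complex.sq_norm]

lemma expand' {d : ℕ} (Q : Finset (Fin d → ℤ)) (c : (Fin d → ℤ) → ℂ) (y : Fin d → ℝ) :
    ((‖trigSum Q c y‖^2 : ℝ) : ℂ) = ∑ z ∈ Q ×ˢ Q, (c z.1 * (starRingEnd ℂ) (c z.2)) *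
      Complex.exp (Complex.I * ∑ j, ((z.1 - z.2 : Fin d → ℤ) j : ℂ) * (y j : ℂ)) := by
  rw [normsq', trigSum, map_sum, Finset.sum_mul_sum, ← Finset.sum_product']
  refine Finset.sum_congr rfl fun z hz => ?_
  simp only [map_mul, ← Complex.exp_conj, map_sum, map_mul, Complex.conj_I,
    Complex.conj_ofReal, map_intCast]
  rw [mul_mul_mul_comm, ← Complex.exp_add]
  congr 2
  have hsub : ∑ j, ((z.1 - z.2 : Fin d → ℤ) j : ℂ) * (y j : ℂ)
      = ∑ j, (z.1 j : ℂ) * (y j : ℂ) - ∑ j, (z.2 j : ℂ) * (y j : ℂ) := by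
    rw [← Finset.sum_sub_distrib]
    refine Finset.sum_congr rfl fun j _ => ?_
    simp only [Pi.sub_apply]
    push_cast
    ring
  rw [hsub]
  ring

theorem stmt12 (d : ℕ) (hd : 0 < d) (Q : Finset (Fin d → ℤ)) (p : ℕ) (hp : p.Prime)
    (a : ℕ) (ha1 : 1 ≤ a) (hap : a < p)
    (ha : ∀ mm ∈ diffSet Q, mm ≠ 0 → ¬ ((p : ℤ) ∣ ∑ j, mm j * (a : ℤ) ^ (j : ℕ))) :
    ∀ c : (Fin d → ℤ) → ℂ,
      lqNormPow d 2 (trigSum Q c) =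
        (1 / p) * ∑ ν ∈ Finset.Icc 1 p, ‖trigSum Q c (xiPoint d p a ν)‖ ^ 2 := by
  intro c
  have hp0 : 0 < p := hp.pos
  set T : ℝ := ∑ k ∈ Q, ‖c k‖^2 with hT
  have hInt : ∀ n : Fin d → ℤ, IntegrableOn
      (fun x : Fin d → ℝ => Complex.exp (Complex.I * ∑ j, (n j:ℂ) * (x j : ℂ)))
      (torusCube d) := by
    intro n
    have hc : Continuous (fun x : Fin d → ℝ =>
        Complex.exp (Complex.I * ∑ j, (n j:ℂ) * (x j : ℂ))) := by fun_prop
    have hsub : torusCube d ⊆ Set.univ.pi fun _ => Set.Icc (0:ℝ) (2*π) :=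
      Set.pi_mono fun i _ => Set.Ico_subset_Icc_self
    exact ((hc.continuousOn).integrableOn_compact
      (isCompact_univ_pi fun _ => isCompact_Icc)).mono_set hsub
  -- left-hand side
  have hL : (∫ x in torusCube d, (‖trigSum Q c x‖^2 : ℝ)) = (2*π)^d * T := by
    have hC : Complex.ofReal (∫ x in torusCube d, (‖trigSum Q c x‖^2 : ℝ))
        = Complex.ofReal ((2*π)^d * T) := by
      calc Complex.ofReal (∫ x in torusCube d, (‖trigSum Q c x‖^2 : ℝ))
          = ∫ x in torusCube d, ((‖trigSum Q c x‖^2 : ℝ) : ℂ) :=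
            integral_ofReal.symm
        _ = ∫ x in torusCube d, ∑ z ∈ Q ×ˢ Q, (c z.1 * (starRingEnd ℂ) (c z.2)) *
              Complex.exp (Complex.I * ∑ j, ((z.1 - z.2 : Fin d → ℤ) j : ℂ) * (x j : ℂ)) := by
            simp_rw [expand']
        _ = ∑ z ∈ Q ×ˢ Q, ∫ x in torusCube d, (c z.1 * (starRingEnd ℂ) (c z.2)) *
              Complex.exp (Complex.I * ∑ j, ((z.1 - z.2 : Fin d → ℤ) j : ℂ) * (x j : ℂ)) :=
            integral_finset_sum _ (fun z _ => (hInt (z.1 - z.2)).const_mul _)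
        _ = ∑ z ∈ Q ×ˢ Q, (c z.1 * (starRingEnd ℂ) (c z.2)) *
              (if z.1 - z.2 = 0 then ((2*π : ℝ)^d : ℂ) else 0) := by
            refine Finset.sum_congr rfl fun z _ => ?_
            rw [MeasureTheory.integral_const_mul, intCube']
        _ = ∑ k ∈ Q, (c k * (starRingEnd ℂ) (c k)) * ((2*π : ℝ)^d : ℂ) := by
            rw [Finset.sum_product]
            refine Finset.sum_congr rfl fun k hk => ?_
            refine Finset.sum_eq_single_of_mem k hk (fun m hm hmk => ?_) |>.trans ?_
            · rw [if_neg (sub_ne_zero.mpr (Ne.symm hmk)), mul_zero]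
            · rw [if_pos (sub_self k)]
        _ = (((2*π)^d * T : ℝ) : ℂ) := by
            simp_rw [← normsq', hT]
            push_cast
            rw [← Finset.sum_mul]
            ring
    exact Complex.ofReal_inj.mp hC
  -- right-hand side
  have hR : ∑ ν ∈ Finset.Icc 1 p, (‖trigSum Q c (xiPoint d p a ν)‖^2 : ℝ) = p * T := by
    have hC : Complex.ofReal (∑ ν ∈ Finset.Icc 1 p, (‖trigSum Q c (xiPoint d p a ν)‖^2 : ℝ))
        = Complex.ofReal (p * T) := by
      rw [Complex.ofReal_sum]
      simp_rw [expand']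
      rw [Finset.sum_comm]
      calc ∑ z ∈ Q ×ˢ Q, ∑ ν ∈ Finset.Icc 1 p, (c z.1 * (starRingEnd ℂ) (c z.2)) *
              Complex.exp (Complex.I * ∑ j, ((z.1 - z.2 : Fin d → ℤ) j : ℂ)
                * ((xiPoint d p a ν) j : ℂ))
          = ∑ z ∈ Q ×ˢ Q, (c z.1 * (starRingEnd ℂ) (c z.2)) *
              (if (p:ℤ) ∣ ∑ j, (z.1 - z.2 : Fin d → ℤ) j * (a:ℤ)^(j:ℕ) then (p:ℂ) else 0) := by
            refine Finset.sum_congr rfl fun z _ => ?_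
            rw [← Finset.mul_sum, pointSum' d p a hp0]
        _ = ∑ k ∈ Q, (c k * (starRingEnd ℂ) (c k)) * (p:ℂ) := by
            rw [Finset.sum_product]
            refine Finset.sum_congr rfl fun k hk => ?_
            refine Finset.sum_eq_single_of_mem k hk (fun m hm hmk => ?_) |>.trans ?_
            · have hmem : (k - m : Fin d → ℤ) ∈ diffSet Q :=
                Finset.mem_image.mpr ⟨(k, m), Finset.mem_product.mpr ⟨hk, hm⟩, rfl⟩
              have hne : (k - m : Fin d → ℤ) ≠ 0 := sub_ne_zero.mpr (Ne.symm hmk)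
              rw [if_neg (ha _ hmem hne), mul_zero]
            · rw [if_pos (by simp)]
        _ = ((p * T : ℝ) : ℂ) := by
            simp_rw [← normsq', hT]
            push_cast
            rw [← Finset.sum_mul]
            ring
    exact Complex.ofReal_inj.mp hC
  have hrpow : ∀ x : Fin d → ℝ, ‖trigSum Q c x‖ ^ (2:ℝ) = (‖trigSum Q c x‖^2 : ℝ) := by
    intro x
    rw [show (2:ℝ) = ((2:ℕ):ℝ) by norm_num, Real.rpow_natCast]
  rw [lqNormPow]
  simp_rw [hrpow]
  rw [hL, hR]
  have h2π : ((2*π)^d : ℝ) ≠ 0 := by positivity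
  have hpr : (p : ℝ) ≠ 0 := by exact_mod_cast hp0.ne'
  field_simp


end
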